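/- arXiv:1912.02105 — 3 statements merged into one kernel-verified Lean document; each statement's English description precedes it below -/
import Mathlib

section
/- The reachability-based influence spread function f(S) = E[|{v : v reachable from S in the random live-edge subgraph}|] is submodular: for all S ⊆ T and any vertex v, f(S ∪ {v}) - f(S) ≥ f(T ∪ {v}) - f(T). -/
open Classical in
/-- Expected influence spread in the live-edge model: each edge `e ∈ E` is
independently present with probability `p e`, and `expectedSpread E p S` is the
expected number of vertices reachable from the seed set `S`. -/
noncomputable def expectedSpread {V : Type*} [Fintype V] [DecidableEq V]
    (E : Finset (V × V)) (p : V × V → ℝ) (S : Finset V) : ℝ :=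
  ∑ H ∈ E.powerset,
    (∏ e ∈ H, p e) * (∏ e ∈ E \ H, (1 - p e)) *
      ((Finset.univ.filter (fun v : V =>
        ∃ s ∈ S, Relation.ReflTransGen (fun a b => (a, b) ∈ H) s v)).card : ℝ)

open Classical in
lemma reach_filter_union {V : Type*} [Fintype V] [DecidableEq V]
    (H : Finset (V × V)) (S T : Finset V) :
    (Finset.univ.filter (fun v : V =>
        ∃ s ∈ S ∪ T, Relation.ReflTransGen (fun a b => (a, b) ∈ H) s v)) =
    (Finset.univ.filter (fun v : V =>
        ∃ s ∈ S, Relation.ReflTransGen (fun a b => (a, b) ∈ H) s v)) ∪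
    (Finset.univ.filter (fun v : V =>
        ∃ s ∈ T, Relation.ReflTransGen (fun a b => (a, b) ∈ H) s v)) := by
  ext x
  simp only [Finset.mem_filter, Finset.mem_union, Finset.mem_univ, true_and]
  constructor
  · rintro ⟨s, hs | hs, h⟩
    · exact Or.inl ⟨s, hs, h⟩
    · exact Or.inr ⟨s, hs, h⟩
  · rintro (⟨s, hs, h⟩ | ⟨s, hs, h⟩)
    · exact ⟨s, Or.inl hs, h⟩
    · exact ⟨s, Or.inr hs, h⟩

open Classical in
/-- The reachability-based expected influence spread is submodular:
for `S ⊆ T` and any vertex `v`,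
`f(S ∪ {v}) - f(S) ≥ f(T ∪ {v}) - f(T)`. -/
theorem expectedSpread_submodular {V : Type*} [Fintype V] [DecidableEq V]
    (E : Finset (V × V)) (p : V × V → ℝ) (hp : ∀ e ∈ E, 0 ≤ p e ∧ p e ≤ 1)
    (S T : Finset V) (hST : S ⊆ T) (v : V) :
    expectedSpread E p (T ∪ {v}) - expectedSpread E p T ≤
      expectedSpread E p (S ∪ {v}) - expectedSpread E p S := by
  unfold expectedSpread
  rw [← Finset.sum_sub_distrib, ← Finset.sum_sub_distrib]
  apply Finset.sum_le_sum
  intro H hH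
  rw [Finset.mem_powerset] at hH
  set w := (∏ e ∈ H, p e) * (∏ e ∈ E \ H, (1 - p e)) with hw
  have hw0 : 0 ≤ w := by
    apply mul_nonneg
    · exact Finset.prod_nonneg fun e he => (hp e (hH he)).1
    · exact Finset.prod_nonneg fun e he => by
        have := (hp e (Finset.mem_sdiff.mp he).1).2; linarith
  rw [← mul_sub, ← mul_sub]
  apply mul_le_mul_of_nonneg_left _ hw0
  -- reachable sets
  set AS := (Finset.univ.filter (fun x : V =>
      ∃ s ∈ S, Relation.ReflTransGen (fun a b => (a, b) ∈ H) s x)) with hAS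
  set AT := (Finset.univ.filter (fun x : V =>
      ∃ s ∈ T, Relation.ReflTransGen (fun a b => (a, b) ∈ H) s x)) with hAT
  set Av := (Finset.univ.filter (fun x : V =>
      ∃ s ∈ ({v} : Finset V), Relation.ReflTransGen (fun a b => (a, b) ∈ H) s x)) with hAv
  have hS : AS ⊆ AT := by
    intro x hx
    rw [hAS, Finset.mem_filter] at hx
    rw [hAT, Finset.mem_filter]
    exact ⟨hx.1, hx.2.imp fun s ⟨hs, h⟩ => ⟨hST hs, h⟩⟩
  have hUS := reach_filter_union H S {v}
  have hUT := reach_filter_union H T {v}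
  rw [hUS, hUT, ← hAS, ← hAT, ← hAv]
  have key : ∀ A : Finset V, ((A ∪ Av).card : ℝ) - A.card = ((Av \ A).card : ℝ) := by
    intro A
    rw [Finset.union_comm, ← Finset.sdiff_union_self_eq_union,
      Finset.card_union_of_disjoint (Finset.sdiff_disjoint)]
    push_cast
    ring
  rw [key, key]
  exact_mod_cast Finset.card_le_card (Finset.sdiff_subset_sdiff (le_refl Av) hS)
end

section
/- A nonnegative monotone submodular function need not be adaptive submodular; more concretely, there exists an instance of an adaptive stochastic optimization problem over two items with binary states in which the expected marginal gain of an item conditioned on a longer observation history strictly exceeds its expected marginal gain under a sub-history, violating the adaptive submodularity inequality. -/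
/-- A realization `φ` of item states is consistent with the partial realization
`ψ` (a set of item–state observations) if it agrees with every observation. -/
def Consistent (ψ : Finset (Fin 2 × Bool)) (φ : Fin 2 → Bool) : Prop :=
  ∀ q ∈ ψ, φ q.1 = q.2

instance (ψ : Finset (Fin 2 × Bool)) (φ : Fin 2 → Bool) :
    Decidable (Consistent ψ φ) := by unfold Consistent; infer_instance

/-- The probability mass of the realizations consistent with `ψ` under `μ`. -/
def mass (μ : (Fin 2 → Bool) → ℝ) (ψ : Finset (Fin 2 × Bool)) : ℝ :=
  ∑ φ ∈ Finset.univ.filter (Consistent ψ), μ φ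

/-- The domain (set of selected items) of a partial realization. -/
def dom (ψ : Finset (Fin 2 × Bool)) : Finset (Fin 2) := ψ.image Prod.fst

/-- The conditional expected marginal benefit `Δ(e | ψ)` of selecting item `e`
given the observations `ψ`. -/
noncomputable def marginal (μ : (Fin 2 → Bool) → ℝ)
    (f : Finset (Fin 2) → (Fin 2 → Bool) → ℝ)
    (ψ : Finset (Fin 2 × Bool)) (e : Fin 2) : ℝ :=
  (∑ φ ∈ Finset.univ.filter (Consistent ψ),
      μ φ * (f (insert e (dom ψ)) φ - f (dom ψ) φ)) / mass μ ψ

lemma sum_fin2bool (g : (Fin 2 → Bool) → ℝ) :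
    ∑ φ : Fin 2 → Bool, g φ =
      g ![false,false] + g ![false,true] + g ![true,false] + g ![true,true] := by
  rw [← Equiv.sum_comp (finTwoArrowEquiv Bool).symm g, Fintype.sum_prod_type]
  simp [finTwoArrowEquiv, Fintype.sum_bool]
  ring

/-- A nonnegative monotone submodular objective need not be adaptive submodular:
there is a finite probability space over the binary states of two items, a
pointwise nonnegative, monotone, submodular objective `f`, partial realizations
`ψ ⊆ ψ'` (each observing each item at most once) with positive probability mass,
and an item `e` with `Δ(e | ψ') > Δ(e | ψ)`, violating adaptive submodularity. -/
theorem not_adaptive_submodular :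
    ∃ (μ : (Fin 2 → Bool) → ℝ) (f : Finset (Fin 2) → (Fin 2 → Bool) → ℝ)
      (ψ ψ' : Finset (Fin 2 × Bool)) (e : Fin 2),
      (∀ φ, 0 ≤ μ φ) ∧ (∑ φ : Fin 2 → Bool, μ φ) = 1 ∧
      (∀ S φ, 0 ≤ f S φ) ∧
      (∀ φ, ∀ S T : Finset (Fin 2), S ⊆ T → f S φ ≤ f T φ) ∧
      (∀ φ, ∀ S T : Finset (Fin 2), S ⊆ T → ∀ x,
        f (insert x T) φ - f T φ ≤ f (insert x S) φ - f S φ) ∧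
      ψ ⊆ ψ' ∧
      (∀ q ∈ ψ', ∀ q' ∈ ψ', q.1 = q'.1 → q = q') ∧
      0 < mass μ ψ ∧ 0 < mass μ ψ' ∧
      marginal μ f ψ e < marginal μ f ψ' e := by
  refine ⟨fun φ => if φ 0 = φ 1 then 1/2 else 0,
      fun S φ => if (1 : Fin 2) ∈ S ∧ φ 1 = true then 1 else 0,
      ∅, {((0 : Fin 2), true)}, 1, ?_, ?_, ?_, ?_, ?_, ?_, ?_, ?_, ?_, ?_⟩
  · intro φ; dsimp only; split_ifs <;> norm_num
  · rw [sum_fin2bool]; norm_num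
  · intro S φ; dsimp only; split_ifs <;> norm_num
  · intro φ S T hST
    dsimp only
    split_ifs with h1 h2 h2 <;> try norm_num
    exact h2 ⟨hST h1.1, h1.2⟩
  · intro φ S T hST x
    dsimp only
    have hA : (1:Fin 2) ∈ S → 1 ∈ T := fun h => hST h
    have hB : (1:Fin 2) ∈ insert x S → 1 ∈ insert x T :=
      fun h => Finset.insert_subset_insert x hST h
    have hC : (1:Fin 2) ∈ insert x T → 1 ∈ T ∨ 1 ∈ insert x S := by
      intro h
      rcases Finset.mem_insert.1 h with h | h
      · exact Or.inr (Finset.mem_insert.2 (Or.inl h))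
      · exact Or.inl h
    have hD : (1:Fin 2) ∈ S → 1 ∈ insert x S := fun h => Finset.mem_insert_of_mem h
    split_ifs <;> norm_num <;> tauto
  · exact Finset.empty_subset _
  · intro q hq q' hq' _
    simp only [Finset.mem_singleton] at hq hq'
    rw [hq, hq']
  · rw [mass, Finset.sum_filter, sum_fin2bool]
    norm_num [Consistent]
  · rw [mass, Finset.sum_filter, sum_fin2bool]
    norm_num [Consistent]
  · rw [marginal, marginal, mass, mass]
    rw [Finset.sum_filter, Finset.sum_filter, Finset.sum_filter, Finset.sum_filter,
      sum_fin2bool, sum_fin2bool, sum_fin2bool, sum_fin2bool]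
    norm_num [Consistent, dom]
end

section
/- Greedy maximization of a monotone submodular set function f with f(∅) = 0 under a cardinality constraint K achieves value at least (1 - (1 - 1/K)^K) · OPT ≥ (1 - 1/e) · OPT. -/
lemma greedy_aux_sum {V : Type*} [DecidableEq V] (f : Finset V → ℝ)
    (hsub : ∀ S T : Finset V, S ⊆ T → ∀ x,
      f (insert x T) - f T ≤ f (insert x S) - f S)
    (A S : Finset V) : f (S ∪ A) - f S ≤ ∑ x ∈ A, (f (insert x S) - f S) := by
  induction A using Finset.induction_on with
  | empty => simp
  | insert _ _ ha ih =>
    rename_i a A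
    rw [Finset.union_insert, Finset.sum_insert ha]
    have h1 := hsub S (S ∪ A) Finset.subset_union_left a
    linarith

/-- Greedy maximization of a monotone submodular set function `f` with
`f ∅ = 0` under a cardinality constraint `K`: if `S 0 = ∅` and at each of the
first `K` steps the greedy algorithm adds a new element of maximum marginal
gain, then `f (S K) ≥ (1 - (1 - 1/K)^K) · f T ≥ (1 - 1/e) · f T` for every
`K`-element set `T` (in particular for an optimal one). -/
theorem greedy_submodular_guarantee {V : Type*} [Fintype V] [DecidableEq V]
    (f : Finset V → ℝ) (K : ℕ) (hK : 1 ≤ K)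
    (hmono : ∀ S T : Finset V, S ⊆ T → f S ≤ f T)
    (hsub : ∀ S T : Finset V, S ⊆ T → ∀ x,
      f (insert x T) - f T ≤ f (insert x S) - f S)
    (hempty : f ∅ = 0)
    (S : ℕ → Finset V) (hS0 : S 0 = ∅)
    (hgreedy : ∀ i < K, ∃ x ∉ S i, S (i + 1) = insert x (S i) ∧
      ∀ y : V, f (insert y (S i)) ≤ f (S (i + 1))) :
    ∀ T : Finset V, T.card = K →
      (1 - (1 - 1 / (K : ℝ)) ^ K) * f T ≤ f (S K) ∧
      (1 - 1 / Real.exp 1) * f T ≤ f (S K) := by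
  intro T hT
  have hKR : (0:ℝ) < K := by exact_mod_cast hK
  have hfT : 0 ≤ f T := by
    have := hmono ∅ T (Finset.empty_subset T)
    rw [hempty] at this; exact this
  have step : ∀ i < K, f T - f (S (i+1)) ≤ (1 - 1/(K:ℝ)) * (f T - f (S i)) := by
    intro i hi
    obtain ⟨x, hx, hSi, hmax⟩ := hgreedy i hi
    have h1 : f T ≤ f (S i ∪ T) := hmono T _ Finset.subset_union_right
    have h2 := greedy_aux_sum f hsub T (S i)
    have h3 : ∑ y ∈ T, (f (insert y (S i)) - f (S i)) ≤ T.card • (f (S (i+1)) - f (S i)) := by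
      apply Finset.sum_le_card_nsmul
      intro y hy
      have := hmax y
      linarith
    rw [hT, nsmul_eq_mul] at h3
    have hΔ : f T - f (S i) ≤ (K:ℝ) * (f (S (i+1)) - f (S i)) := by linarith
    have heq : (1 - 1/(K:ℝ)) * (f T - f (S i))
        = (f T - f (S i)) - (f T - f (S i))/K := by field_simp
    rw [heq]
    have hdiv : (f T - f (S i))/(K:ℝ) ≤ f (S (i+1)) - f (S i) := by
      rw [div_le_iff₀ hKR]
      nlinarith
    linarith
  have hq : 0 ≤ 1 - 1/(K:ℝ) := by
    have : 1/(K:ℝ) ≤ 1 := by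
      rw [div_le_one hKR]; exact_mod_cast hK
    linarith
  have bound : ∀ i ≤ K, f T - f (S i) ≤ (1 - 1/(K:ℝ))^i * f T := by
    intro i
    induction i with
    | zero => intro _; simp [hS0, hempty]
    | succ n ih =>
      intro hn
      have h1 := step n (Nat.lt_of_succ_le hn)
      have h2 := ih (Nat.le_of_succ_le hn)
      calc f T - f (S (n+1)) ≤ (1 - 1/(K:ℝ)) * (f T - f (S n)) := h1
        _ ≤ (1 - 1/(K:ℝ)) * ((1 - 1/(K:ℝ))^n * f T) :=
            mul_le_mul_of_nonneg_left h2 hq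
        _ = (1 - 1/(K:ℝ))^(n+1) * f T := by ring
  have main := bound K le_rfl
  have hfirst : (1 - (1 - 1 / (K : ℝ)) ^ K) * f T ≤ f (S K) := by
    have heq : (1 - (1 - 1/(K:ℝ))^K) * f T = f T - (1 - 1/(K:ℝ))^K * f T := by ring
    rw [heq]; linarith
  refine ⟨hfirst, ?_⟩
  have he : (1 - 1/(K:ℝ))^K ≤ 1 / Real.exp 1 := by
    have h1 : 1 - 1/(K:ℝ) ≤ Real.exp (-(1/K)) := by
      have := Real.add_one_le_exp (-(1/(K:ℝ)))
      linarith
    have h2 : (1 - 1/(K:ℝ))^K ≤ (Real.exp (-(1/K)))^K :=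
      pow_le_pow_left₀ hq h1 K
    have h3 : (Real.exp (-(1/(K:ℝ))))^K = Real.exp (-1) := by
      rw [← Real.exp_nat_mul]
      congr 1
      field_simp
    rw [h3, Real.exp_neg] at h2
    simpa [one_div] using h2
  have hmul : (1 - 1/Real.exp 1) * f T ≤ (1 - (1 - 1/(K:ℝ))^K) * f T := by
    apply mul_le_mul_of_nonneg_right _ hfT
    linarith
  linarith
end
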